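/- Let u be a positive bounded function defined in B_3 ⊂ ℝ^n and suppose there are constants C ≥ 1, ρ ≥ 0, ε > 0, κ > 0, λ > 0 and γ > 0 such that, with δ = (2^{1+2λ}C)^{−1/γ}: (1) inf_{B_r(x)} u ≤ C (r^{−λ} inf_{B_1} u + ρ) for every x with |x| ≤ 2 and every r ∈ (κε, 1); (2) osc(u, B_r(x)) ≤ C (r/R)^γ (sup_{B_R(x)} u + R²ρ) for every x with |x| ≤ 2, every R ≤ 1 and every r with ε < r ≤ δR, where moreover εκ < δR. Then sup_{B_1} u ≤ C̃ (inf_{B_1} u + ρ + ε^{2λ} sup_{B_3} u), where C̃ = (2^{1+2λ}C)^{2λ/γ} · max(C·2^{2+2λ}, (2κ)^{2λ}). -/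

import Mathlib

open Metric

set_option maxHeartbeats 1000000 in
/-- Let `u` be a positive bounded function in `B_3 ⊂ ℝ^n` and suppose there
are `C ≥ 1`, `ρ ≥ 0`, `ε > 0`, `κ > 0`, `λ > 0`, `γ > 0` such that, with
`δ = (2^{1+2λ}C)^{−1/γ}`:
(1) `inf_{B_r(x)} u ≤ C(r^{−λ} inf_{B_1} u + ρ)` for every `|x| ≤ 2` and `r ∈ (κε, 1)`;
(2) `osc(u, B_r(x)) ≤ C (r/R)^γ (sup_{B_R(x)} u + R²ρ)` for every `|x| ≤ 2`, `R ≤ 1` and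
`ε < r ≤ δR` with `εκ < δR`.
Then `sup_{B_1} u ≤ C̃ (inf_{B_1} u + ρ + ε^{2λ} sup_{B_3} u)` with
`C̃ = (2^{1+2λ}C)^{2λ/γ} max(C·2^{2+2λ}, (2κ)^{2λ})`. -/
theorem harnack_sufficient_conditions (n : ℕ) (hn : 1 ≤ n)
    (u : EuclideanSpace ℝ (Fin n) → ℝ)
    (C ρ ε κ lam γ : ℝ)
    (hC : 1 ≤ C) (hρ : 0 ≤ ρ) (hε : 0 < ε) (hκ : 0 < κ) (hlam : 0 < lam) (hγ : 0 < γ)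
    (hpos : ∀ x ∈ ball (0 : EuclideanSpace ℝ (Fin n)) 3, 0 < u x)
    (hbdd : BddAbove (u '' ball (0 : EuclideanSpace ℝ (Fin n)) 3))
    (h1 : ∀ x : EuclideanSpace ℝ (Fin n), ‖x‖ ≤ 2 →
      ∀ r : ℝ, κ * ε < r → r < 1 →
        sInf (u '' ball x r) ≤
          C * (r ^ (-lam) * sInf (u '' ball (0 : EuclideanSpace ℝ (Fin n)) 1) + ρ))
    (h2 : ∀ x : EuclideanSpace ℝ (Fin n), ‖x‖ ≤ 2 →
      ∀ R : ℝ, R ≤ 1 →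
        ∀ r : ℝ, ε < r → r ≤ ((2 : ℝ) ^ (1 + 2 * lam) * C) ^ (-(1 / γ)) * R →
          ε * κ < ((2 : ℝ) ^ (1 + 2 * lam) * C) ^ (-(1 / γ)) * R →
          sSup (u '' ball x r) - sInf (u '' ball x r) ≤
            C * (r / R) ^ γ * (sSup (u '' ball x R) + R ^ 2 * ρ)) :
    sSup (u '' ball (0 : EuclideanSpace ℝ (Fin n)) 1) ≤
      ((2 : ℝ) ^ (1 + 2 * lam) * C) ^ (2 * lam / γ) *
        max (C * 2 ^ (2 + 2 * lam)) ((2 * κ) ^ (2 * lam)) *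
        (sInf (u '' ball (0 : EuclideanSpace ℝ (Fin n)) 1) + ρ +
          ε ^ (2 * lam) * sSup (u '' ball (0 : EuclideanSpace ℝ (Fin n)) 3)) := by
  classical
  have hC0 : (0:ℝ) < C := lt_of_lt_of_le one_pos hC
  have h2pow1 : (1:ℝ) < (2:ℝ) ^ (1 + 2*lam) := by
    have h0 : (0:ℝ) < 1 + 2*lam := by linarith
    calc (1:ℝ) = (2:ℝ) ^ (0:ℝ) := (Real.rpow_zero 2).symm
    _ < (2:ℝ) ^ (1 + 2*lam) := Real.rpow_lt_rpow_of_exponent_lt one_lt_two h0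
  set X : ℝ := (2:ℝ) ^ (1 + 2*lam) * C with hXdef
  have hX1 : 1 < X := by
    have := h2pow1; nlinarith
  have hXpos : (0:ℝ) < X := lt_trans one_pos hX1
  set δ : ℝ := X ^ (-(1/γ)) with hδdef
  have hδpos : 0 < δ := Real.rpow_pos_of_pos hXpos _
  have hδ1 : δ < 1 := Real.rpow_lt_one_of_one_lt_of_neg hX1 (by
    have : 0 < 1/γ := by positivity
    linarith)
  have hδγ : δ ^ γ = X⁻¹ := by
    rw [hδdef, ← Real.rpow_mul hXpos.le,
      show -(1/γ) * γ = -1 by field_simp, Real.rpow_neg_one]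
  set θ : ℝ := C / X with hθdef
  have hθ2 : θ = (2:ℝ) ^ (-(1 + 2*lam)) := by
    rw [hθdef, hXdef, Real.rpow_neg (by norm_num : (0:ℝ) ≤ 2)]
    field_simp
  have hθpos : 0 < θ := by rw [hθdef]; positivity
  have hθhalf : θ ≤ 1/2 := by
    rw [hθ2, Real.rpow_neg (by norm_num : (0:ℝ) ≤ 2)]
    rw [show (1/2:ℝ) = ((2:ℝ)^(1:ℝ))⁻¹ by norm_num]
    apply inv_anti₀ (by norm_num)
    exact Real.rpow_le_rpow_of_exponent_le one_le_two (by linarith)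
  have hCδγ : C * δ ^ γ = θ := by rw [hδγ, hθdef]; ring
  set κ' : ℝ := max κ 1 with hκ'def
  have hκ'1 : 1 ≤ κ' := le_max_right _ _
  have hκκ' : κ ≤ κ' := le_max_left _ _
  -- basic facts about u on balls
  set m : ℝ := sInf (u '' ball (0 : EuclideanSpace ℝ (Fin n)) 1) with hmdef
  set S : ℝ := sSup (u '' ball (0 : EuclideanSpace ℝ (Fin n)) 3) with hSdef
  have hbddsub : ∀ s : Set (EuclideanSpace ℝ (Fin n)),
      s ⊆ ball 0 3 → BddAbove (u '' s) := fun s hs => hbdd.mono (Set.image_mono hs)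
  have hnnsub : ∀ s : Set (EuclideanSpace ℝ (Fin n)), s ⊆ ball 0 3 →
      ∀ v ∈ u '' s, (0:ℝ) ≤ v := by
    rintro s hs v ⟨y, hy, rfl⟩; exact (hpos y (hs hy)).le
  have hm0 : 0 ≤ m := Real.sInf_nonneg (hnnsub _ (ball_subset_ball (by norm_num)))
  have hS0 : 0 ≤ S := Real.sSup_nonneg (hnnsub _ subset_rfl)
  set Mk : ℕ → ℝ := fun k => sSup (u '' ball (0 : EuclideanSpace ℝ (Fin n)) (2 - (1/2:ℝ)^k))
    with hMkdef
  have hMknn : ∀ k, 0 ≤ Mk k := by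
    intro k
    apply Real.sSup_nonneg
    apply hnnsub
    apply ball_subset_ball
    nlinarith [pow_nonneg (by norm_num : (0:ℝ) ≤ 1/2) k]
  have hMkS : ∀ k, Mk k ≤ S := by
    intro k
    apply csSup_le_csSup hbdd
    · refine ⟨u 0, Set.mem_image_of_mem u (mem_ball_self ?_)⟩
      have hp1 : (1/2:ℝ)^k ≤ 1 := pow_le_one₀ (by norm_num) (by norm_num)
      linarith
    · apply Set.image_mono
      apply ball_subset_ball
      nlinarith [pow_nonneg (by norm_num : (0:ℝ) ≤ 1/2) k]
  -- the one-step estimate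
  have step : ∀ k : ℕ, κ' * ε < δ * (1/2:ℝ)^(k+1) →
      Mk k ≤ C * (δ * (1/2:ℝ)^(k+1)) ^ (-lam) * m + C * ρ + θ * (Mk (k+1) + ρ) := by
    intro k hk
    simp only [hMkdef]
    have hR0 : (0:ℝ) < (1/2:ℝ)^(k+1) := by positivity
    have hRhalf : (1/2:ℝ)^(k+1) ≤ 1/2 := by
      calc (1/2:ℝ)^(k+1) ≤ (1/2:ℝ)^1 :=
        pow_le_pow_of_le_one (by norm_num) (by norm_num) (by omega)
      _ = 1/2 := pow_one _
    have hr0 : 0 < δ * (1/2:ℝ)^(k+1) := by positivity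
    have hr1 : δ * (1/2:ℝ)^(k+1) < 1 := by
      have h' := mul_le_mul_of_nonneg_left hRhalf hδpos.le
      linarith
    have hεr : ε < δ * (1/2:ℝ)^(k+1) := by
      have h' : ε ≤ κ' * ε := le_mul_of_one_le_left hε.le hκ'1
      linarith
    have hκεr : κ * ε < δ * (1/2:ℝ)^(k+1) := by
      have h' : κ * ε ≤ κ' * ε := mul_le_mul_of_nonneg_right hκκ' hε.le
      linarith
    have hsubnext3 : ball (0:EuclideanSpace ℝ (Fin n)) (2 - (1/2:ℝ)^(k+1)) ⊆
        ball (0:EuclideanSpace ℝ (Fin n)) 3 :=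
      ball_subset_ball (by linarith [pow_nonneg (by norm_num : (0:ℝ) ≤ 1/2) (k+1)])
    have a2 : 0 ≤ sSup (u '' ball (0:EuclideanSpace ℝ (Fin n)) (2 - (1/2:ℝ)^(k+1))) :=
      Real.sSup_nonneg (hnnsub _ hsubnext3)
    apply Real.sSup_le
    · rintro v ⟨y, hy, rfl⟩
      rw [mem_ball, dist_zero_right] at hy
      have hpk : (0:ℝ) < (1/2:ℝ)^k := by positivity
      have hy2 : ‖y‖ ≤ 2 := by linarith
      have hsub3 : ball y (δ * (1/2:ℝ)^(k+1)) ⊆ ball (0:EuclideanSpace ℝ (Fin n)) 3 := by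
        apply ball_subset_ball'
        rw [dist_zero_right]
        linarith
      have hmem : u y ∈ u '' ball y (δ * (1/2:ℝ)^(k+1)) :=
        Set.mem_image_of_mem u (mem_ball_self hr0)
      have huy : u y ≤ sSup (u '' ball y (δ * (1/2:ℝ)^(k+1))) :=
        le_csSup (hbddsub _ hsub3) hmem
      have hinf := h1 y hy2 (δ * (1/2:ℝ)^(k+1)) hκεr hr1
      have hosc := h2 y hy2 ((1/2:ℝ)^(k+1)) (by linarith) (δ * (1/2:ℝ)^(k+1)) hεr
        (le_refl _) (by rw [mul_comm ε κ]; exact hκεr)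
      rw [show δ * (1/2:ℝ)^(k+1) / (1/2:ℝ)^(k+1) = δ from by field_simp] at hosc
      have hsubnext : ball y ((1/2:ℝ)^(k+1)) ⊆
          ball (0:EuclideanSpace ℝ (Fin n)) (2 - (1/2:ℝ)^(k+1)) := by
        apply ball_subset_ball'
        rw [dist_zero_right]
        have hhalfk : (1/2:ℝ)^(k+1) = (1/2:ℝ)^k / 2 := by ring
        linarith
      have hsupR : sSup (u '' ball y ((1/2:ℝ)^(k+1))) ≤
          sSup (u '' ball (0:EuclideanSpace ℝ (Fin n)) (2 - (1/2:ℝ)^(k+1))) :=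
        csSup_le_csSup (hbddsub _ hsubnext3)
          ⟨u y, Set.mem_image_of_mem u (mem_ball_self hR0)⟩ (Set.image_mono hsubnext)
      have hCδγ0 : 0 ≤ C * δ ^ γ := mul_nonneg hC0.le (Real.rpow_nonneg hδpos.le _)
      have hosc2 : sSup (u '' ball y (δ * (1/2:ℝ)^(k+1)))
            - sInf (u '' ball y (δ * (1/2:ℝ)^(k+1)))
          ≤ θ * (sSup (u '' ball (0:EuclideanSpace ℝ (Fin n)) (2 - (1/2:ℝ)^(k+1))) + ρ) := by
        calc sSup (u '' ball y (δ * (1/2:ℝ)^(k+1)))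
              - sInf (u '' ball y (δ * (1/2:ℝ)^(k+1)))
            ≤ C * δ ^ γ * (sSup (u '' ball y ((1/2:ℝ)^(k+1))) + ((1/2:ℝ)^(k+1))^2 * ρ) := hosc
        _ ≤ C * δ ^ γ * (sSup (u '' ball (0:EuclideanSpace ℝ (Fin n)) (2 - (1/2:ℝ)^(k+1))) + ρ) := by
            apply mul_le_mul_of_nonneg_left _ hCδγ0
            have ht1 : ((1/2:ℝ)^(k+1))^2 ≤ 1 := by nlinarith [hR0.le, hRhalf]
            have hsq : ((1/2:ℝ)^(k+1))^2 * ρ ≤ ρ := by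
              have := mul_le_mul_of_nonneg_right ht1 hρ
              linarith
            linarith
        _ = θ * (sSup (u '' ball (0:EuclideanSpace ℝ (Fin n)) (2 - (1/2:ℝ)^(k+1))) + ρ) := by
            rw [hCδγ]
      linarith
    · have a1 : 0 ≤ (δ * (1/2:ℝ)^(k+1))^(-lam) := Real.rpow_nonneg hr0.le _
      have a3 : 0 ≤ C * (δ * (1/2:ℝ)^(k+1))^(-lam) * m := mul_nonneg (mul_nonneg hC0.le a1) hm0
      have a4 : 0 ≤ θ * (sSup (u '' ball (0:EuclideanSpace ℝ (Fin n)) (2 - (1/2:ℝ)^(k+1))) + ρ) :=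
        mul_nonneg hθpos.le (by linarith)
      have a5 : 0 ≤ C * ρ := mul_nonneg hC0.le hρ
      linarith
  -- per-step cost bound
  set G : ℝ := C * (δ ^ (-lam) * (2:ℝ) ^ lam) * m + 2*C*ρ with hGdef
  have hG0 : 0 ≤ G := by
    rw [hGdef]
    have a1 := Real.rpow_nonneg hδpos.le (-lam)
    have a2 := Real.rpow_nonneg (by norm_num : (0:ℝ) ≤ 2) lam
    have : 0 ≤ C * (δ ^ (-lam) * (2:ℝ) ^ lam) * m :=
      mul_nonneg (mul_nonneg hC0.le (mul_nonneg a1 a2)) hm0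
    nlinarith
  have hp2r : ∀ (a:ℝ) (k:ℕ), ((2:ℝ)^a)^k = (2:ℝ)^(a*(k:ℝ)) := by
    intro a k
    rw [← Real.rpow_natCast ((2:ℝ)^a) k, ← Real.rpow_mul (by norm_num : (0:ℝ) ≤ 2)]
  have hhalfpow : ∀ k:ℕ, ((1/2:ℝ))^k = (2:ℝ)^(-(k:ℝ)) := by
    intro k
    rw [show (1/2:ℝ) = (2:ℝ)^(-1:ℝ) by rw [Real.rpow_neg_one]; norm_num, hp2r]
    norm_num
  have E : ∀ k : ℕ, θ^k * (C * (δ * (1/2:ℝ)^(k+1)) ^ (-lam) * m + (C + θ) * ρ)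
      ≤ (1/2:ℝ)^k * G := by
    intro k
    have core : θ^k * (((1/2:ℝ))^(k+1))^(-lam) ≤ (1/2:ℝ)^k * (2:ℝ)^lam := by
      rw [hθ2, hp2r, hhalfpow (k+1), hhalfpow k, ← Real.rpow_mul (by norm_num : (0:ℝ) ≤ 2),
        ← Real.rpow_add two_pos, ← Real.rpow_add two_pos]
      apply Real.rpow_le_rpow_of_exponent_le one_le_two
      push_cast
      have := mul_nonneg hlam.le (Nat.cast_nonneg (α := ℝ) k)
      nlinarith
    have e1 : θ^k * (δ * (1/2:ℝ)^(k+1)) ^ (-lam) ≤ (1/2:ℝ)^k * (δ^(-lam) * (2:ℝ)^lam) := by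
      rw [Real.mul_rpow hδpos.le (by positivity)]
      calc θ^k * (δ^(-lam) * ((1/2:ℝ)^(k+1))^(-lam))
          = δ^(-lam) * (θ^k * ((1/2:ℝ)^(k+1))^(-lam)) := by ring
      _ ≤ δ^(-lam) * ((1/2:ℝ)^k * (2:ℝ)^lam) :=
          mul_le_mul_of_nonneg_left core (Real.rpow_nonneg hδpos.le _)
      _ = (1/2:ℝ)^k * (δ^(-lam) * (2:ℝ)^lam) := by ring
    have e2 : θ^k * (C + θ) ≤ (1/2:ℝ)^k * (2*C) := by
      have hθk : θ^k ≤ (1/2:ℝ)^k := pow_le_pow_left₀ hθpos.le hθhalf k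
      have hCθ : C + θ ≤ 2*C := by linarith
      exact mul_le_mul hθk hCθ (by linarith) (by positivity)
    have t1 := mul_le_mul_of_nonneg_left e1 (mul_nonneg hC0.le hm0)
    have t2 := mul_le_mul_of_nonneg_left e2 hρ
    calc θ^k * (C * (δ * (1/2:ℝ)^(k+1)) ^ (-lam) * m + (C + θ) * ρ)
        = (C*m) * (θ^k * (δ * (1/2:ℝ)^(k+1)) ^ (-lam)) + ρ * (θ^k * (C+θ)) := by ring
    _ ≤ (C*m) * ((1/2:ℝ)^k * (δ^(-lam) * (2:ℝ)^lam)) + ρ * ((1/2:ℝ)^k * (2*C)) :=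
        add_le_add t1 t2
    _ = (1/2:ℝ)^k * G := by rw [hGdef]; ring
  -- iteration
  have iter : ∀ N : ℕ, (∀ j < N, κ' * ε < δ * (1/2:ℝ)^(j+1)) →
      Mk 0 ≤ (2 - 2*(1/2:ℝ)^N) * G + θ^N * Mk N := by
    intro N
    induction N with
    | zero => intro _; norm_num
    | succ k ih =>
      intro hcon
      have IH := ih (fun j hj => hcon j (Nat.lt_succ_of_lt hj))
      have hstep := step k (hcon k k.lt_succ_self)
      have hEk := E k
      have h1' : θ^k * Mk k ≤ θ^k * (C * (δ * (1/2:ℝ)^(k+1)) ^ (-lam) * m + C * ρ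
          + θ * (Mk (k+1) + ρ)) := mul_le_mul_of_nonneg_left hstep (pow_nonneg hθpos.le k)
      calc Mk 0 ≤ (2 - 2*(1/2:ℝ)^k) * G + θ^k * Mk k := IH
      _ ≤ (2 - 2*(1/2:ℝ)^k) * G + (θ^k * (C * (δ * (1/2:ℝ)^(k+1)) ^ (-lam) * m + (C + θ) * ρ)
            + θ^(k+1) * Mk (k+1)) := by
          have : θ^k * (C * (δ * (1/2:ℝ)^(k+1)) ^ (-lam) * m + C * ρ + θ * (Mk (k+1) + ρ))
              = θ^k * (C * (δ * (1/2:ℝ)^(k+1)) ^ (-lam) * m + (C + θ) * ρ)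
                + θ^(k+1) * Mk (k+1) := by ring
          linarith
      _ ≤ (2 - 2*(1/2:ℝ)^k) * G + ((1/2:ℝ)^k * G + θ^(k+1) * Mk (k+1)) := by linarith
      _ = (2 - 2*(1/2:ℝ)^(k+1)) * G + θ^(k+1) * Mk (k+1) := by ring
  -- choose N
  obtain ⟨N0, hN0⟩ : ∃ N : ℕ, (1/2:ℝ)^N < (κ' * ε) / δ :=
    exists_pow_lt_of_lt_one (by positivity) (by norm_num)
  have hPex : ∃ N : ℕ, δ * (1/2:ℝ)^(N+1) ≤ κ' * ε := by
    refine ⟨N0, ?_⟩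
    have h1' : (1/2:ℝ)^(N0+1) ≤ (1/2:ℝ)^N0 :=
      pow_le_pow_of_le_one (by norm_num) (by norm_num) (Nat.le_succ _)
    have h2' : δ * (1/2:ℝ)^N0 < κ' * ε := by
      rw [lt_div_iff₀ hδpos] at hN0; linarith [hN0]
    calc δ * (1/2:ℝ)^(N0+1) ≤ δ * (1/2:ℝ)^N0 := mul_le_mul_of_nonneg_left h1' hδpos.le
    _ ≤ κ' * ε := h2'.le
  obtain ⟨N, hPN, hlt⟩ : ∃ N : ℕ, δ * (1/2:ℝ)^(N+1) ≤ κ' * ε ∧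
      ∀ j < N, κ' * ε < δ * (1/2:ℝ)^(j+1) :=
    ⟨Nat.find hPex, Nat.find_spec hPex, fun j hj => lt_of_not_ge (Nat.find_min hPex hj)⟩
  have main := iter N hlt
  -- bound θ^N
  set D : ℝ := X ^ (2*lam/γ) with hDdef
  have hD1 : 1 ≤ D := by
    rw [hDdef, show (1:ℝ) = X ^ (0:ℝ) by rw [Real.rpow_zero]]
    exact Real.rpow_le_rpow_of_exponent_le hX1.le (by positivity)
  have hδinv : δ⁻¹ ^ (2*lam) = D := by
    rw [hδdef, ← Real.rpow_neg hXpos.le, neg_neg, ← Real.rpow_mul hXpos.le, hDdef]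
    congr 1
    field_simp
  have hθN : θ^N ≤ D * ((2*κ')^(2*lam) * ε^(2*lam)) := by
    have hbound : (1/2:ℝ)^N ≤ (2*κ'*ε) / δ := by
      rw [le_div_iff₀ hδpos]
      have hps : (1/2:ℝ)^(N+1) = (1/2:ℝ)^N * (1/2) := pow_succ _ _
      rw [hps] at hPN
      linarith [hPN]
    have hb : θ^N ≤ ((1/2:ℝ)^N)^(2*lam) := by
      rw [hθ2, hp2r, hhalfpow N, ← Real.rpow_mul (by norm_num : (0:ℝ) ≤ 2)]
      apply Real.rpow_le_rpow_of_exponent_le one_le_two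
      have := mul_nonneg hlam.le (Nat.cast_nonneg (α := ℝ) N)
      nlinarith
    have hc : ((1/2:ℝ)^N)^(2*lam) ≤ ((2*κ'*ε) / δ)^(2*lam) :=
      Real.rpow_le_rpow (by positivity) hbound (by linarith)
    have hd : ((2*κ'*ε) / δ)^(2*lam) = D * ((2*κ')^(2*lam) * ε^(2*lam)) := by
      rw [div_eq_mul_inv,
        Real.mul_rpow (by positivity) (by positivity),
        Real.mul_rpow (by positivity) hε.le, hδinv]
      ring
    calc θ^N ≤ ((1/2:ℝ)^N)^(2*lam) := hb
    _ ≤ ((2*κ'*ε) / δ)^(2*lam) := hc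
    _ = D * ((2*κ')^(2*lam) * ε^(2*lam)) := hd
  -- final assembly
  set K : ℝ := max (C * 2 ^ (2 + 2 * lam)) ((2 * κ) ^ (2 * lam)) with hKdef
  have hpow22 : (4:ℝ) ≤ (2:ℝ) ^ (2 + 2*lam) := by
    rw [show (4:ℝ) = (2:ℝ)^(2:ℝ) by rw [show (2:ℝ) = ((2:ℕ):ℝ) by norm_num, Real.rpow_natCast]; norm_num]
    exact Real.rpow_le_rpow_of_exponent_le one_le_two (by linarith)
  have hK0 : 0 < K := lt_max_of_lt_left (by positivity)
  have hKC : C * 2 ^ (2 + 2*lam) ≤ K := le_max_left _ _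
  have f1 : 2 * (C * (δ ^ (-lam) * (2:ℝ) ^ lam)) ≤ D * K := by
    have hδD : δ ^ (-lam) ≤ D := by
      rw [hδdef, ← Real.rpow_mul hXpos.le, hDdef]
      apply Real.rpow_le_rpow_of_exponent_le hX1.le
      rw [show -(1/γ) * -lam = lam * γ⁻¹ by ring, show 2*lam/γ = (2*lam) * γ⁻¹ by ring]
      have hγi : (0:ℝ) < γ⁻¹ := by positivity
      nlinarith
    have h2C : 2 * C * (2:ℝ)^lam ≤ K := by
      have e : 2 * (2:ℝ)^lam = (2:ℝ)^(1+lam) := by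
        rw [Real.rpow_add two_pos, Real.rpow_one]
      have e2 : (2:ℝ)^(1+lam) ≤ (2:ℝ)^(2+2*lam) :=
        Real.rpow_le_rpow_of_exponent_le one_le_two (by linarith)
      calc 2*C*(2:ℝ)^lam = C * (2*(2:ℝ)^lam) := by ring
      _ = C * (2:ℝ)^(1+lam) := by rw [e]
      _ ≤ C * (2:ℝ)^(2+2*lam) := mul_le_mul_of_nonneg_left e2 hC0.le
      _ ≤ K := hKC
    calc 2 * (C * (δ ^ (-lam) * (2:ℝ) ^ lam)) = (2*C*(2:ℝ)^lam) * δ^(-lam) := by ring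
    _ ≤ K * D := mul_le_mul h2C hδD (Real.rpow_nonneg hδpos.le _) hK0.le
    _ = D * K := mul_comm _ _
  have f2 : 4 * C ≤ D * K := by
    calc 4 * C = C * 4 := by ring
    _ ≤ C * 2 ^ (2 + 2*lam) := mul_le_mul_of_nonneg_left hpow22 hC0.le
    _ ≤ K := hKC
    _ = 1 * K := (one_mul K).symm
    _ ≤ D * K := mul_le_mul_of_nonneg_right hD1 hK0.le
  have f3 : D * ((2*κ')^(2*lam) * ε^(2*lam)) * S ≤ D * K * (ε^(2*lam) * S) := by
    have hκ'K : (2*κ')^(2*lam) ≤ K := by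
      rcases le_total κ 1 with h | h
      · rw [hκ'def, max_eq_right h]
        have e1 : (2*(1:ℝ))^(2*lam) ≤ (2:ℝ)^(2+2*lam) := by
          rw [mul_one]
          exact Real.rpow_le_rpow_of_exponent_le one_le_two (by linarith)
        have e2 : (2:ℝ)^(2+2*lam) ≤ C * (2:ℝ)^(2+2*lam) := by
          nlinarith [Real.rpow_nonneg (by norm_num : (0:ℝ) ≤ 2) (2+2*lam)]
        exact le_trans (le_trans e1 e2) hKC
      · rw [hκ'def, max_eq_left h]
        exact le_max_right _ _
    have hD0 : (0:ℝ) ≤ D := by linarith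
    calc D * ((2*κ')^(2*lam) * ε^(2*lam)) * S
        = (2*κ')^(2*lam) * (D * (ε^(2*lam) * S)) := by ring
    _ ≤ K * (D * (ε^(2*lam) * S)) := mul_le_mul_of_nonneg_right hκ'K
        (mul_nonneg hD0 (mul_nonneg (Real.rpow_nonneg hε.le _) hS0))
    _ = D * K * (ε^(2*lam) * S) := by ring
  have hMk01 : sSup (u '' ball (0 : EuclideanSpace ℝ (Fin n)) 1) = Mk 0 := by
    rw [hMkdef]; norm_num
  rw [hMk01]
  have hθNS : θ^N * Mk N ≤ D * ((2*κ')^(2*lam) * ε^(2*lam)) * S := by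
    calc θ^N * Mk N ≤ θ^N * S := mul_le_mul_of_nonneg_left (hMkS N) (pow_nonneg hθpos.le N)
    _ ≤ D * ((2*κ')^(2*lam) * ε^(2*lam)) * S := mul_le_mul_of_nonneg_right hθN hS0
  have hGbound : (2 - 2*(1/2:ℝ)^N) * G ≤ 2 * G :=
    mul_le_mul_of_nonneg_right
      (by linarith [pow_nonneg (by norm_num : (0:ℝ) ≤ 1/2) N]) hG0
  have hf1m : 2 * (C * (δ ^ (-lam) * (2:ℝ) ^ lam)) * m ≤ D * K * m :=
    mul_le_mul_of_nonneg_right f1 hm0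
  have hf2ρ : 4 * C * ρ ≤ D * K * ρ := mul_le_mul_of_nonneg_right f2 hρ
  calc Mk 0 ≤ (2 - 2*(1/2:ℝ)^N) * G + θ^N * Mk N := main
  _ ≤ 2 * G + D * ((2*κ')^(2*lam) * ε^(2*lam)) * S := by linarith
  _ ≤ D * K * m + D * K * ρ + D * K * (ε^(2*lam) * S) := by
      rw [hGdef]; linarith [hf1m, hf2ρ, f3]
  _ = D * K * (m + ρ + ε ^ (2*lam) * S) := by ring
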